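/- Consider the n-dimensional real Jordan algebra A with basis e_1, ..., e_n and multiplication e_1e_1 = e_1, e_1e_j = e_j for 2 ≤ j ≤ n, and e_ie_j = 0 otherwise (symmetrized). With the inner product making {e_i} orthonormal, the Jordan Ricci tensor of (A, ⟨·,·⟩) vanishes identically: Ric = 0, where Ric(X,Y) = −½Σ_{i,j}⟨XE_i,E_j⟩⟨YE_i,E_j⟩ + ¼Σ_{i,j}⟨E_iE_j,X⟩⟨E_iE_j,Y⟩ + ½B(X,Y) − ¼⟨H,XY⟩, B is the Killing form B(X,Y) = Tr L_X L_Y, and H = Σ_i E_i². -/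
import Mathlib


open RealInnerProductSpace

lemma trace_onb {V : Type*} [NormedAddCommGroup V] [InnerProductSpace ℝ V]
    [FiniteDimensional ℝ V] {n : ℕ} (b : OrthonormalBasis (Fin n) ℝ V)
    (f : V →ₗ[ℝ] V) :
    LinearMap.trace ℝ V f = ∑ i, ⟪f (b i), b i⟫ := by
  rw [LinearMap.trace_eq_matrix_trace ℝ b.toBasis f, Matrix.trace]
  congr 1
  ext i
  rw [Matrix.diag_apply, LinearMap.toMatrix_apply, OrthonormalBasis.coe_toBasis,
    b.coe_toBasis_repr_apply, b.repr_apply_apply, real_inner_comm]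

/-- The n-dimensional Jordan algebra with e₁e₁ = e₁,
e₁e_j = e_je₁ = e_j and e_ie_j = 0 otherwise, with the inner product making
{e_i} orthonormal, has vanishing Jordan Ricci tensor. -/
theorem example_flat_einstein
    {V : Type*} [NormedAddCommGroup V] [InnerProductSpace ℝ V] [FiniteDimensional ℝ V]
    {n : ℕ} (hn : 0 < n)
    (b : OrthonormalBasis (Fin n) ℝ V)
    (mul : V →ₗ[ℝ] V →ₗ[ℝ] V)
    (h1 : ∀ j : Fin n, mul (b ⟨0, hn⟩) (b j) = b j)
    (h2 : ∀ j : Fin n, mul (b j) (b ⟨0, hn⟩) = b j)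
    (h3 : ∀ i j : Fin n, i ≠ ⟨0, hn⟩ → j ≠ ⟨0, hn⟩ → mul (b i) (b j) = 0) :
    ∀ X Y : V,
      -(1/2) * ∑ i, ∑ j, ⟪mul X (b i), b j⟫ * ⟪mul Y (b i), b j⟫
      + (1/4) * ∑ i, ∑ j, ⟪mul (b i) (b j), X⟫ * ⟪mul (b i) (b j), Y⟫
      + (1/2) * LinearMap.trace ℝ V (mul X ∘ₗ mul Y)
      - (1/4) * ⟪∑ i, mul (b i) (b i), mul X Y⟫ = 0 := by
  intro X Y
  set z : Fin n := ⟨0, hn⟩ with hz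
  have hbb : ∀ i j : Fin n, ⟪b i, b j⟫ = if i = j then (1:ℝ) else 0 :=
    orthonormal_iff_ite.mp b.orthonormal
  -- basic multiplication facts for general vectors
  have hmulz : ∀ W : V, mul W (b z) = W := by
    intro W
    conv_lhs => rw [← b.sum_repr' W]
    rw [map_sum, LinearMap.sum_apply]
    simp only [map_smul, LinearMap.smul_apply, h2]
    exact b.sum_repr' W
  have hmulnz : ∀ (W : V) (j : Fin n), j ≠ z → mul W (b j) = ⟪W, b z⟫ • b j := by
    intro W j hj
    conv_lhs => rw [← b.sum_repr' W]
    rw [map_sum, LinearMap.sum_apply]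
    rw [Finset.sum_eq_single z]
    · simp only [map_smul, LinearMap.smul_apply, h1]
      rw [real_inner_comm]
    · intro i _ hi
      simp only [map_smul, LinearMap.smul_apply, h3 i j hi hj, smul_zero]
    · simp
  have hXY : ∀ W U : V,
      mul W U = ⟪U, b z⟫ • W + ⟪W, b z⟫ • U - (⟪W, b z⟫ * ⟪U, b z⟫) • b z := by
    intro W U
    conv_lhs => rw [← b.sum_repr' U]
    rw [map_sum]
    rw [← Finset.add_sum_erase _ _ (Finset.mem_univ z)]
    have hc : ∀ j ∈ Finset.univ.erase z,
        mul W (⟪b j, U⟫ • b j) = ⟪W, b z⟫ • (⟪b j, U⟫ • b j) := by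
      intro j hj
      rw [map_smul, hmulnz W j (Finset.ne_of_mem_erase hj), smul_comm]
    rw [Finset.sum_congr rfl hc, ← Finset.smul_sum]
    have hsum : ∑ j ∈ Finset.univ.erase z, ⟪b j, U⟫ • b j
        = U - ⟪b z, U⟫ • b z := by
      have h := Finset.add_sum_erase Finset.univ (fun j => (⟪b j, U⟫ : ℝ) • b j)
        (Finset.mem_univ z)
      rw [b.sum_repr' U] at h
      rw [eq_sub_iff_add_eq, add_comm]
      exact h
    rw [hsum, map_smul, hmulz, real_inner_comm (b z) U]
    rw [smul_sub, smul_smul]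
    abel
  -- full Parseval in the needed orientation
  have hfull : ∀ u v : V, ∑ i, ⟪b i, u⟫ * ⟪b i, v⟫ = ⟪u, v⟫ := by
    intro u v
    rw [← b.sum_inner_mul_inner u v]
    exact Finset.sum_congr rfl fun j _ => by rw [real_inner_comm u (b j)]
  -- Term 1
  have T1 : ∑ i, ∑ j, ⟪mul X (b i), b j⟫ * ⟪mul Y (b i), b j⟫
      = ⟪X, Y⟫ + ((n : ℝ) - 1) * (⟪X, b z⟫ * ⟪Y, b z⟫) := by
    have hij : ∀ i : Fin n, ∑ j, ⟪mul X (b i), b j⟫ * ⟪mul Y (b i), b j⟫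
        = ⟪mul X (b i), mul Y (b i)⟫ := by
      intro i
      rw [← hfull (mul X (b i)) (mul Y (b i))]
      exact Finset.sum_congr rfl fun j _ => by
        rw [real_inner_comm (mul X (b i)) (b j), real_inner_comm (mul Y (b i)) (b j)]
    rw [Finset.sum_congr rfl fun i _ => hij i]
    rw [← Finset.add_sum_erase _ _ (Finset.mem_univ z)]
    have h1' : ⟪mul X (b z), mul Y (b z)⟫ = ⟪X, Y⟫ := by rw [hmulz, hmulz]
    have h2' : ∀ i ∈ Finset.univ.erase z,
        ⟪mul X (b i), mul Y (b i)⟫ = ⟪X, b z⟫ * ⟪Y, b z⟫ := by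
      intro i hi
      have hi' := Finset.ne_of_mem_erase hi
      rw [hmulnz X i hi', hmulnz Y i hi', real_inner_smul_left, real_inner_smul_right,
        hbb i i, if_pos rfl, mul_one]
    rw [h1', Finset.sum_congr rfl h2', Finset.sum_const, Finset.card_erase_of_mem
      (Finset.mem_univ z), Finset.card_univ, Fintype.card_fin]
    rw [nsmul_eq_mul, Nat.cast_sub hn]
    push_cast
    ring
  -- Term 2
  have T2 : ∑ i, ∑ j, ⟪mul (b i) (b j), X⟫ * ⟪mul (b i) (b j), Y⟫
      = 2 * ⟪X, Y⟫ - ⟪X, b z⟫ * ⟪Y, b z⟫ := by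
    have hrow : ∀ i : Fin n, ∑ j, ⟪mul (b i) (b j), X⟫ * ⟪mul (b i) (b j), Y⟫
        = if i = z then ⟪X, Y⟫ else ⟪b i, X⟫ * ⟪b i, Y⟫ := by
      intro i
      by_cases hi : i = z
      · subst hi
        rw [if_pos rfl, ← hfull X Y]
        exact Finset.sum_congr rfl fun j _ => by rw [h1]
      · rw [if_neg hi]
        rw [Finset.sum_eq_single z]
        · rw [h2]
        · intro j _ hj
          rw [h3 i j hi hj]
          simp
        · simp
    rw [Finset.sum_congr rfl fun i _ => hrow i]
    rw [← Finset.add_sum_erase _ _ (Finset.mem_univ z), if_pos rfl]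
    have herase : ∑ i ∈ Finset.univ.erase z,
        (if i = z then ⟪X, Y⟫ else ⟪b i, X⟫ * ⟪b i, Y⟫)
        = ∑ i ∈ Finset.univ.erase z, ⟪b i, X⟫ * ⟪b i, Y⟫ :=
      Finset.sum_congr rfl fun i hi => if_neg (Finset.ne_of_mem_erase hi)
    have hall : ∑ i ∈ Finset.univ.erase z, ⟪b i, X⟫ * ⟪b i, Y⟫
        = ⟪X, Y⟫ - ⟪X, b z⟫ * ⟪Y, b z⟫ := by
      have h := Finset.add_sum_erase Finset.univ (fun i => (⟪b i, X⟫ : ℝ) * ⟪b i, Y⟫)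
        (Finset.mem_univ z)
      rw [hfull X Y] at h
      rw [eq_sub_iff_add_eq, add_comm, real_inner_comm (b z) X, real_inner_comm (b z) Y]
      exact h
    rw [herase, hall]
    ring
  -- Term 3 (trace)
  have T3 : LinearMap.trace ℝ V (mul X ∘ₗ mul Y) = (n : ℝ) * (⟪X, b z⟫ * ⟪Y, b z⟫) := by
    rw [trace_onb b]
    have hterm : ∀ i : Fin n, ⟪(mul X ∘ₗ mul Y) (b i), b i⟫ = ⟪X, b z⟫ * ⟪Y, b z⟫ := by
      intro i
      rw [LinearMap.comp_apply]
      by_cases hi : i = z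
      · subst hi
        rw [hmulz Y, hXY X Y]
        rw [inner_sub_left, inner_add_left, real_inner_smul_left, real_inner_smul_left,
          real_inner_smul_left, hbb z z, if_pos rfl]
        ring
      · rw [hmulnz Y i hi, map_smul, hmulnz X i hi, real_inner_smul_left,
          real_inner_smul_left, hbb i i, if_pos rfl]
        ring
    rw [Finset.sum_congr rfl fun i _ => hterm i, Finset.sum_const, Finset.card_univ,
      Fintype.card_fin, nsmul_eq_mul]
  -- Term 4
  have T4 : ⟪∑ i, mul (b i) (b i), mul X Y⟫ = ⟪X, b z⟫ * ⟪Y, b z⟫ := by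
    have hsum : ∑ i, mul (b i) (b i) = b z := by
      rw [Finset.sum_eq_single z]
      · rw [h2]
      · intro i _ hi
        exact h3 i i hi hi
      · simp
    rw [hsum, hXY X Y]
    rw [inner_sub_right, inner_add_right, real_inner_smul_right, real_inner_smul_right,
      real_inner_smul_right, hbb z z, if_pos rfl, real_inner_comm X (b z),
      real_inner_comm Y (b z)]
    ring
  rw [T1, T2, T3, T4]
  ring
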